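/- (Multi-particle factorization of duality function) For ℓ distinct sites i₁ < ... < i_ℓ, D(η, ξ^{(i₁,...,i_ℓ)}) = q^{4j∑_k i_k - ℓ²}/(q^{2j}-q^{-2j})^ℓ · ∏_{k=1}^ℓ (q^{2N_{i_k}(η)} - q^{2N_{i_k+1}(η)}), where ξ^{(i₁,...,i_ℓ)} is the dual configuration with one particle at each of i₁,...,i_ℓ and N_i(η) = ∑_{k≥i} η_k. -/

import Mathlib

/-- The q-number [n]_q = (q^n - q^{-n})/(q - q^{-1}). -/
noncomputable def qNum (q : ℝ) (n : ℕ) : ℝ := (q ^ n - q⁻¹ ^ n) / (q - q⁻¹)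

/-- The q-factorial [n]_q!. -/
noncomputable def qFact (q : ℝ) (n : ℕ) : ℝ := ∏ k ∈ Finset.Icc 1 n, qNum q k

/-- The q-binomial coefficient. -/
noncomputable def qBinom (q : ℝ) (n k : ℕ) : ℝ := qFact q n / (qFact q k * qFact q (n - k))

/-- N_i(η) = ∑_{k ≥ i} η_k. -/
noncomputable def Nright (η : ℤ → ℕ) (i : ℤ) : ℤ :=
  ∑ᶠ k : ℤ, if i ≤ k then (η k : ℤ) else 0

/-- The self-duality function of ASEP(q,j), with J = 2j. -/
noncomputable def Dfun (q : ℝ) (J : ℕ) (η ξ : ℤ → ℕ) : ℝ :=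
  ∏ᶠ m : ℤ,
    (qBinom q (η m) (ξ m) / qBinom q J (ξ m)) *
      q ^ (((η m : ℤ) - ξ m) * (2 * (∑ᶠ k : ℤ, if k < m then (ξ k : ℤ) else 0) + ξ m)
            + 2 * J * m * ξ m) *
      (if ξ m ≤ η m then 1 else 0)

section aux
variable {q : ℝ}

lemma hqlt (hq0 : 0 < q) (hq1 : q < 1) : q < q⁻¹ := by
  have h := mul_inv_cancel₀ (ne_of_gt hq0)
  nlinarith

lemma qNum_pos (hq0 : 0 < q) (hq1 : q < 1) {n : ℕ} (hn : 1 ≤ n) : 0 < qNum q n := by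
  have h := hqlt hq0 hq1
  have h1 : q ^ n < q⁻¹ ^ n := by
    apply pow_lt_pow_left₀ h (le_of_lt hq0)
    omega
  unfold qNum
  apply div_pos_of_neg_of_neg <;> linarith

lemma qFact_pos (hq0 : 0 < q) (hq1 : q < 1) (n : ℕ) : 0 < qFact q n := by
  unfold qFact
  apply Finset.prod_pos
  intro k hk
  exact qNum_pos hq0 hq1 (Finset.mem_Icc.mp hk).1

lemma qBinom_zero (hq0 : 0 < q) (hq1 : q < 1) (n : ℕ) : qBinom q n 0 = 1 := by
  unfold qBinom
  rw [show qFact q 0 = 1 by unfold qFact; simp]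
  rw [Nat.sub_zero, one_mul, div_self (ne_of_gt (qFact_pos hq0 hq1 n))]

lemma qFact_one (hq0 : 0 < q) (hq1 : q < 1) : qFact q 1 = 1 := by
  have h := hqlt hq0 hq1
  unfold qFact qNum
  simp [div_self (by linarith : q - q⁻¹ ≠ 0)]

lemma qFact_succ (n : ℕ) : qFact q (n + 1) = qFact q n * qNum q (n + 1) := by
  unfold qFact
  rw [Finset.prod_Icc_succ_top (by omega)]

lemma qBinom_one (hq0 : 0 < q) (hq1 : q < 1) {n : ℕ} (hn : 1 ≤ n) :
    qBinom q n 1 = qNum q n := by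
  obtain ⟨m, rfl⟩ := Nat.exists_eq_add_of_le hn
  unfold qBinom
  rw [qFact_one hq0 hq1, one_mul, Nat.add_sub_cancel_left, add_comm 1 m, qFact_succ,
    mul_comm, mul_div_assoc, div_self (ne_of_gt (qFact_pos hq0 hq1 m)), mul_one]

lemma qNum_zpow (n : ℕ) :
    qNum q n = (q ^ (n : ℤ) - q ^ (-(n : ℤ))) / (q - q⁻¹) := by
  rw [qNum, zpow_natCast, zpow_neg, zpow_natCast, inv_pow]

lemma prod_zpow_sum (hq0 : 0 < q) {α : Type*} (s : Finset α) (f : α → ℤ) :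
    ∏ i ∈ s, q ^ (f i) = q ^ (∑ i ∈ s, f i) := by
  classical
  induction s using Finset.induction with
  | empty => simp
  | insert a s h ih =>
    rw [Finset.prod_insert h, Finset.sum_insert h, ih, ← zpow_add₀ (ne_of_gt hq0)]

lemma sum_two_mul_add_one (ℓ : ℕ) : ∑ k : Fin ℓ, (2 * (k : ℤ) + 1) = (ℓ : ℤ) ^ 2 := by
  induction ℓ with
  | zero => simp
  | succ n ih =>
    rw [Fin.sum_univ_castSucc]
    simp only [Fin.coe_castSucc] at *
    rw [ih]
    push_cast
    ring

end aux

/-- (Multi-particle factorization of the duality function) For distinct sites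
i₁ < ... < i_ℓ, D(η, ξ^{(i₁,...,i_ℓ)}) = q^{4j∑ᵢ i_k - ℓ²}/(q^{2j}-q^{-2j})^ℓ ·
∏_{k=1}^ℓ (q^{2N_{i_k}(η)} - q^{2N_{i_k+1}(η)}), with J = 2j. -/
theorem stmt15 (q : ℝ) (hq0 : 0 < q) (hq1 : q < 1) (J : ℕ) (hJ : 1 ≤ J)
    (η : ℤ → ℕ) (hb : ∀ k, η k ≤ J)
    (hfin : ∀ m : ℤ, {k : ℤ | m ≤ k ∧ η k ≠ 0}.Finite)
    (ℓ : ℕ) (sites : Fin ℓ → ℤ) (hmono : StrictMono sites) :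
    Dfun q J η (fun m => if m ∈ Finset.image sites Finset.univ then 1 else 0)
      = q ^ (2 * (J : ℤ) * (∑ k, sites k) - (ℓ : ℤ) ^ 2) /
          (q ^ (J : ℤ) - q ^ (-(J : ℤ))) ^ ℓ *
        ∏ k : Fin ℓ, (q ^ (2 * Nright η (sites k)) - q ^ (2 * Nright η (sites k + 1))) := by
  classical
  have hqne : q ≠ 0 := ne_of_gt hq0
  have hql : q < q⁻¹ := hqlt hq0 hq1
  have hqsub : q - q⁻¹ ≠ 0 := by linarith
  set S : Finset ℤ := Finset.image sites Finset.univ with hS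
  set ξ : ℤ → ℕ := fun m => if m ∈ Finset.image sites Finset.univ then 1 else 0 with hξ
  set T : Finset ℤ := S ∪ Finset.univ.biUnion (fun k : Fin ℓ => (hfin (sites k + 1)).toFinset)
    with hT
  have hST : S ⊆ T := Finset.subset_union_left
  set Cm : ℤ → ℤ := fun m => ((Finset.univ.filter fun k : Fin ℓ => sites k < m).card : ℤ)
    with hCm
  have hξ0 : ∀ m : ℤ, m ∉ S → ξ m = 0 := by
    intro m hm
    simp only [hξ, hS] at *
    rw [if_neg hm]
  have hξ1 : ∀ m : ℤ, m ∈ S → ξ m = 1 := by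
    intro m hm
    simp only [hξ, hS] at *
    rw [if_pos hm]
  -- the inner finsum equals Cm
  have hC : ∀ m : ℤ, (∑ᶠ k : ℤ, if k < m then (ξ k : ℤ) else 0) = Cm m := by
    intro m
    have hsub : (Function.support fun k : ℤ => if k < m then (ξ k : ℤ) else 0) ⊆ (S : Set ℤ) := by
      intro k hk
      simp only [Function.mem_support, ne_eq] at hk
      by_contra hkS
      have : ξ k = 0 := hξ0 k hkS
      simp [this] at hk
    rw [finsum_eq_sum_of_support_subset _ hsub, hS,
      Finset.sum_image (fun x _ y _ h => hmono.injective h)]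
    have : ∀ j : Fin ℓ, (if sites j < m then (ξ (sites j) : ℤ) else 0)
        = (if sites j < m then (1 : ℤ) else 0) := by
      intro j
      have : ξ (sites j) = 1 := hξ1 _ (by
        rw [hS]; exact Finset.mem_image_of_mem _ (Finset.mem_univ j))
      rw [this]
      simp
    rw [Finset.sum_congr rfl fun j _ => this j, Finset.sum_boole, hCm]
  have hCsite : ∀ k : Fin ℓ, Cm (sites k) = (k : ℤ) := by
    intro k
    have h1 : (Finset.univ.filter fun j : Fin ℓ => sites j < sites k)
        = Finset.univ.filter fun j : Fin ℓ => j < k := by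
      apply Finset.filter_congr
      intro j _
      simp [hmono.lt_iff_lt]
    have h2 : (Finset.univ.filter fun j : Fin ℓ => j < k) = Finset.Iio k := by
      ext j; simp
    rw [hCm]
    simp only [h1, h2, Fin.card_Iio]
  -- Nright as finite sums
  have hNright_eq : ∀ (i : ℤ) (U : Finset ℤ), (hfin i).toFinset ⊆ U →
      Nright η i = ∑ m ∈ U, if i ≤ m then (η m : ℤ) else 0 := by
    intro i U hU
    rw [Nright]
    apply finsum_eq_sum_of_support_subset
    intro m hm
    simp only [Function.mem_support, ne_eq] at hm
    apply hU
    simp only [Set.Finite.mem_toFinset, Set.mem_setOf_eq]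
    by_cases h : i ≤ m
    · refine ⟨h, ?_⟩
      intro h0
      simp [h, h0] at hm
    · simp [h] at hm
  have hNrec : ∀ i : ℤ, Nright η i = (η i : ℤ) + Nright η (i + 1) := by
    intro i
    set U : Finset ℤ := insert i (hfin i).toFinset with hU
    have hsub1 : (hfin i).toFinset ⊆ U := Finset.subset_insert _ _
    have hsub2 : (hfin (i+1)).toFinset ⊆ U := by
      intro m hm
      apply Finset.mem_insert_of_mem
      simp only [Set.Finite.mem_toFinset, Set.mem_setOf_eq] at hm ⊢
      exact ⟨by omega, hm.2⟩
    rw [hNright_eq i U hsub1, hNright_eq (i+1) U hsub2]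
    have : ∀ m ∈ U, (if i ≤ m then (η m : ℤ) else 0)
        = (if m = i then (η i : ℤ) else 0) + (if i + 1 ≤ m then (η m : ℤ) else 0) := by
      intro m _
      rcases lt_trichotomy m i with h | h | h
      · rw [if_neg (by omega), if_neg (by omega), if_neg (by omega)]; ring
      · subst h; rw [if_pos le_rfl, if_pos rfl, if_neg (by omega)]; ring
      · rw [if_pos (by omega), if_neg (by omega), if_pos (by omega)]; ring
    rw [Finset.sum_congr rfl this, Finset.sum_add_distrib, Finset.sum_ite_eq' U i]
    rw [if_pos (Finset.mem_insert_self i _)]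
  -- the factor function
  set f : ℤ → ℝ := fun m =>
    (qBinom q (η m) (ξ m) / qBinom q J (ξ m)) *
      q ^ (((η m : ℤ) - ξ m) * (2 * (∑ᶠ k : ℤ, if k < m then (ξ k : ℤ) else 0) + ξ m)
            + 2 * J * m * ξ m) *
      (if ξ m ≤ η m then 1 else 0) with hf
  -- support of f
  have hsupp : Function.mulSupport f ⊆ (T : Set ℤ) := by
    intro m hm
    by_contra hmT
    apply hm
    have hmT' : m ∉ T := hmT
    have hmS : m ∉ S := fun h => hmT' (hST h)
    have hx : ξ m = 0 := hξ0 m hmS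
    have hCm0 : Cm m * (η m : ℤ) = 0 := by
      by_cases hη : η m = 0
      · simp [hη]
      · have : (Finset.univ.filter fun k : Fin ℓ => sites k < m) = ∅ := by
          rw [Finset.filter_eq_empty_iff]
          intro k _ hk
          apply hmT'
          rw [hT]
          apply Finset.mem_union_right
          rw [Finset.mem_biUnion]
          exact ⟨k, Finset.mem_univ k, by
            simp only [Set.Finite.mem_toFinset, Set.mem_setOf_eq]
            exact ⟨by omega, hη⟩⟩
        simp [hCm, this]
    rw [hf]
    simp only [hx, hC m, Nat.cast_zero, sub_zero, add_zero, mul_zero]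
    rw [qBinom_zero hq0 hq1, qBinom_zero hq0 hq1]
    rw [if_pos (Nat.zero_le _)]
    have : (η m : ℤ) * (2 * Cm m) = 0 := by linarith [hCm0]
    rw [this]
    norm_num
  have h1 : Dfun q J η ξ = ∏ m ∈ T, f m := by
    rw [Dfun]
    exact finprod_eq_prod_of_mulSupport_subset f hsupp
  have h2 : ∏ m ∈ T, f m = (∏ m ∈ T \ S, f m) * ∏ m ∈ S, f m :=
    (Finset.prod_sdiff hST).symm
  rw [h1, h2]
  by_cases hall : ∀ k : Fin ℓ, 1 ≤ η (sites k)
  · -- main case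
    -- non-site factors
    have h3 : ∏ m ∈ T \ S, f m = q ^ (∑ m ∈ T \ S, (η m : ℤ) * (2 * Cm m)) := by
      rw [← prod_zpow_sum hq0]
      apply Finset.prod_congr rfl
      intro m hm
      have hmS : m ∉ S := (Finset.mem_sdiff.mp hm).2
      have hx : ξ m = 0 := hξ0 m hmS
      rw [hf]
      simp only [hx, hC m, Nat.cast_zero, sub_zero, add_zero, mul_zero]
      rw [qBinom_zero hq0 hq1, qBinom_zero hq0 hq1, if_pos (Nat.zero_le _)]
      norm_num
    set X : Fin ℓ → ℝ := fun k =>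
      q ^ ((η (sites k) : ℤ)) - q ^ (-(η (sites k) : ℤ)) with hX
    set Y : ℝ := q ^ (J : ℤ) - q ^ (-(J : ℤ)) with hY
    set dd : Fin ℓ → ℤ := fun k =>
      ((η (sites k) : ℤ) - 1) * (2 * (k : ℤ) + 1) + 2 * J * sites k with hdd
    -- site factors
    have hYne : Y ≠ 0 := by
      have : q ^ (J : ℤ) < q ^ (-(J : ℤ)) := by
        rw [zpow_natCast, zpow_neg, zpow_natCast, ← inv_pow]
        apply pow_lt_pow_left₀ hql (le_of_lt hq0)
        omega
      rw [hY]; intro h; rw [sub_eq_zero] at h; linarith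
    have hfsite : ∀ k : Fin ℓ, f (sites k) = X k / Y * q ^ (dd k) := by
      intro k
      have hmem : sites k ∈ S := by rw [hS]; exact Finset.mem_image_of_mem _ (Finset.mem_univ k)
      have hx : ξ (sites k) = 1 := hξ1 _ hmem
      rw [hf]
      simp only [hx, hC (sites k), hCsite k, Nat.cast_one]
      rw [qBinom_one hq0 hq1 (hall k), qBinom_one hq0 hq1 hJ, if_pos (hall k)]
      rw [qNum_zpow, qNum_zpow]
      rw [div_div_div_comm, div_self hqsub, div_one]
      simp only [hX, hY, hdd, mul_one]
    have h4 : ∏ m ∈ S, f m = (∏ k, X k) * q ^ (∑ k, dd k) / Y ^ ℓ := by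
      rw [hS, Finset.prod_image (fun x _ y _ h => hmono.injective h)]
      rw [Finset.prod_congr rfl fun k _ => hfsite k]
      rw [Finset.prod_mul_distrib, Finset.prod_div_distrib, Finset.prod_const,
        prod_zpow_sum hq0, Finset.card_univ, Fintype.card_fin]
      ring
    -- RHS product
    set gg : Fin ℓ → ℤ := fun k => 2 * Nright η (sites k + 1) + (η (sites k) : ℤ) with hgg
    have h5 : (∏ k : Fin ℓ, (q ^ (2 * Nright η (sites k)) - q ^ (2 * Nright η (sites k + 1))))
        = q ^ (∑ k, gg k) * ∏ k, X k := by
      rw [← prod_zpow_sum hq0, ← Finset.prod_mul_distrib]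
      apply Finset.prod_congr rfl
      intro k _
      rw [hNrec (sites k), hgg, hX, mul_sub, ← zpow_add₀ hqne, ← zpow_add₀ hqne]
      congr 2 <;> ring
    -- key combinatorial identity
    have hTsub : ∀ k : Fin ℓ, (hfin (sites k + 1)).toFinset ⊆ T := by
      intro k m hm
      rw [hT]
      apply Finset.mem_union_right
      rw [Finset.mem_biUnion]
      exact ⟨k, Finset.mem_univ k, hm⟩
    have hNT : ∀ k : Fin ℓ, Nright η (sites k + 1)
        = ∑ m ∈ T, if sites k < m then (η m : ℤ) else 0 := by
      intro k
      rw [hNright_eq (sites k + 1) T (hTsub k)]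
      apply Finset.sum_congr rfl
      intro m _
      congr 1
    have key : ∑ m ∈ T, (η m : ℤ) * Cm m = ∑ k : Fin ℓ, Nright η (sites k + 1) := by
      have step1 : ∀ m : ℤ, (η m : ℤ) * Cm m
          = ∑ k : Fin ℓ, (if sites k < m then (η m : ℤ) else 0) := by
        intro m
        rw [Finset.sum_ite, Finset.sum_const, Finset.sum_const_zero, add_zero,
          nsmul_eq_mul, hCm]
        ring
      rw [Finset.sum_congr rfl fun m _ => step1 m, Finset.sum_comm]
      apply Finset.sum_congr rfl
      intro k _
      exact (hNT k).symm
    have keysplit : ∑ m ∈ T, (η m : ℤ) * Cm m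
        = ∑ m ∈ T \ S, (η m : ℤ) * Cm m + ∑ k : Fin ℓ, (η (sites k) : ℤ) * (k : ℤ) := by
      rw [← Finset.sum_sdiff hST]
      congr 1
      rw [hS, Finset.sum_image (fun x _ y _ h => hmono.injective h)]
      exact Finset.sum_congr rfl fun k _ => by rw [hCsite k]
    have e0 : ∑ m ∈ T \ S, (η m : ℤ) * (2 * Cm m)
        = 2 * ∑ m ∈ T \ S, (η m : ℤ) * Cm m := by
      rw [Finset.mul_sum]
      exact Finset.sum_congr rfl fun m _ => by ring
    have e1 : ∑ k, dd k = 2 * (∑ k, (η (sites k) : ℤ) * (k : ℤ)) + (∑ k, (η (sites k) : ℤ))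
        - (ℓ : ℤ) ^ 2 + 2 * (J : ℤ) * (∑ k, sites k) := by
      have hsimp : ∀ k : Fin ℓ, dd k
          = 2 * ((η (sites k) : ℤ) * (k : ℤ)) + (η (sites k) : ℤ) - (2 * (k : ℤ) + 1)
            + 2 * (J : ℤ) * sites k := by
        intro k; rw [hdd]; ring
      rw [Finset.sum_congr rfl fun k _ => hsimp k, Finset.sum_add_distrib,
        Finset.sum_sub_distrib, Finset.sum_add_distrib, sum_two_mul_add_one,
        ← Finset.mul_sum, ← Finset.mul_sum]
    have e2 : ∑ k, gg k = 2 * (∑ k, Nright η (sites k + 1)) + ∑ k, (η (sites k) : ℤ) := by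
      rw [hgg, Finset.sum_add_distrib, ← Finset.mul_sum]
    have h6 : (∑ m ∈ T \ S, (η m : ℤ) * (2 * Cm m)) + ∑ k, dd k
        = (2 * (J : ℤ) * (∑ k, sites k) - (ℓ : ℤ) ^ 2) + ∑ k, gg k := by
      rw [e0, e1, e2]
      have := key
      rw [keysplit] at this
      linarith
    rw [h3, h4, h5]
    have hcomb : q ^ (∑ m ∈ T \ S, (η m : ℤ) * (2 * Cm m)) * q ^ (∑ k, dd k)
        = q ^ (2 * (J : ℤ) * (∑ k, sites k) - (ℓ : ℤ) ^ 2) * q ^ (∑ k, gg k) := by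
      rw [← zpow_add₀ hqne, ← zpow_add₀ hqne, h6]
    linear_combination (∏ k, X k) / Y ^ ℓ * hcomb
  · -- a site with no particle: both sides vanish
    push_neg at hall
    obtain ⟨k, hk⟩ := hall
    have hk0 : η (sites k) = 0 := by omega
    have hmem : sites k ∈ S := by rw [hS]; exact Finset.mem_image_of_mem _ (Finset.mem_univ k)
    have hzero : f (sites k) = 0 := by
      rw [hf]
      beta_reduce
      have hx : ξ (sites k) = 1 := hξ1 _ hmem
      rw [hx, hk0, if_neg (by omega)]
      ring
    have hL : (∏ m ∈ S, f m) = 0 := Finset.prod_eq_zero hmem hzero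
    rw [hL, mul_zero]
    have hR : (∏ k : Fin ℓ, (q ^ (2 * Nright η (sites k)) - q ^ (2 * Nright η (sites k + 1)))) = 0 := by
      apply Finset.prod_eq_zero (Finset.mem_univ k)
      rw [hNrec (sites k), hk0]
      norm_num
    rw [hR, mul_zero]
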